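/- Let λ > 0 and let f : ℝ → ℝ be integrable and continuous. Then the function T[f] is twice continuously differentiable on ℝ and satisfies (T[f])″(x) + 4λ²·T[f](x) = f(x) for all x ∈ ℝ. -/

import Mathlib

open MeasureTheory Real

/-- Auxiliary ODE lemma: any function of the form
`x ↦ μ (sin(2λx)(2G(x)+A) + cos(2λx)(B−2H(x)))` with `4λμ = 1`, where `G' = cos(2λ·)f`
and `H' = sin(2λ·)f`, is `C²` and solves `u'' + 4λ²u = f`. -/
lemma aux_ode (lam mu A B : ℝ) (hmu : 4 * lam * mu = 1) (f G H : ℝ → ℝ) (hfc : Continuous f)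
    (hG : ∀ x : ℝ, HasDerivAt G (Real.cos (2 * lam * x) * f x) x)
    (hH : ∀ x : ℝ, HasDerivAt H (Real.sin (2 * lam * x) * f x) x) :
    ContDiff ℝ 2 (fun x => mu * (Real.sin (2 * lam * x) * (2 * G x + A) +
        Real.cos (2 * lam * x) * (B - 2 * H x))) ∧
      ∀ x : ℝ,
        deriv (deriv (fun x => mu * (Real.sin (2 * lam * x) * (2 * G x + A) +
          Real.cos (2 * lam * x) * (B - 2 * H x)))) x +
        4 * lam ^ 2 * (mu * (Real.sin (2 * lam * x) * (2 * G x + A) +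
          Real.cos (2 * lam * x) * (B - 2 * H x))) = f x := by
  set T1 : ℝ → ℝ := fun x => mu * (Real.sin (2 * lam * x) * (2 * G x + A) +
      Real.cos (2 * lam * x) * (B - 2 * H x)) with hT1def
  set D1 : ℝ → ℝ := fun x => (2 * lam * mu) * (Real.cos (2 * lam * x) * (2 * G x + A) -
      Real.sin (2 * lam * x) * (B - 2 * H x)) with hD1def
  have hsin : ∀ x : ℝ, HasDerivAt (fun x => Real.sin (2 * lam * x))
      (2 * lam * Real.cos (2 * lam * x)) x := by
    intro x
    have := (Real.hasDerivAt_sin (2 * lam * x)).comp x ((hasDerivAt_id x).const_mul (2 * lam))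
    refine this.congr_deriv (Eq.symm ?_)
    ring
  have hcos : ∀ x : ℝ, HasDerivAt (fun x => Real.cos (2 * lam * x))
      (-(2 * lam * Real.sin (2 * lam * x))) x := by
    intro x
    have := (Real.hasDerivAt_cos (2 * lam * x)).comp x ((hasDerivAt_id x).const_mul (2 * lam))
    refine this.congr_deriv (Eq.symm ?_)
    ring
  have hd1 : ∀ x : ℝ, HasDerivAt T1 (D1 x) x := by
    intro x
    have h1 := (((hsin x).mul (((hG x).const_mul 2).add_const A)).add
      ((hcos x).mul (((hH x).const_mul 2).const_sub B))).const_mul mu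
    refine h1.congr_deriv (Eq.symm ?_)
    simp only [hD1def]
    ring
  have hd2 : ∀ x : ℝ, HasDerivAt D1 (f x - 4 * lam ^ 2 * T1 x) x := by
    intro x
    have h1 := (((hcos x).mul (((hG x).const_mul 2).add_const A)).sub
      ((hsin x).mul (((hH x).const_mul 2).const_sub B))).const_mul (2 * lam * mu)
    refine h1.congr_deriv (Eq.symm ?_)
    have hpy := Real.sin_sq_add_cos_sq (2 * lam * x)
    simp only [hT1def]
    linear_combination (-(f x)) * hmu - (4 * lam * mu * f x) * hpy
  have hdT1 : deriv T1 = D1 := funext fun x => (hd1 x).deriv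
  have hdD1 : deriv D1 = fun x => f x - 4 * lam ^ 2 * T1 x := funext fun x => (hd2 x).deriv
  have hT1diff : Differentiable ℝ T1 := fun x => (hd1 x).differentiableAt
  constructor
  · rw [show (2 : WithTop ℕ∞) = 1 + 1 by norm_num]
    refine contDiff_succ_iff_deriv.mpr ⟨hT1diff, by simp, ?_⟩
    rw [hdT1]
    refine contDiff_one_iff_deriv.mpr ⟨fun x => (hd2 x).differentiableAt, ?_⟩
    rw [hdD1]
    exact hfc.sub (continuous_const.mul hT1diff.continuous)
  · intro x
    rw [hdT1, hdD1]
    show f x - 4 * lam ^ 2 * T1 x + 4 * lam ^ 2 * T1 x = f x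
    ring

/-- The operator `T` defined by `T[f](x) = (1/(4λ)) ∫_ℝ sin(2λ|x − y|) f(y) dy`. -/
noncomputable def opT (lam : ℝ) (f : ℝ → ℝ) (x : ℝ) : ℝ :=
  (1 / (4 * lam)) * ∫ y : ℝ, Real.sin (2 * lam * |x - y|) * f y

/-- for `λ > 0` and `f` integrable and continuous, `T[f]` is twice
continuously differentiable and satisfies `(T[f])″(x) + 4λ²·T[f](x) = f(x)` for all `x`. -/
theorem stmt_0 (lam : ℝ) (hlam : 0 < lam) (f : ℝ → ℝ)
    (hf : Integrable f) (hfc : Continuous f) :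
    ContDiff ℝ 2 (opT lam f) ∧
      ∀ x : ℝ, deriv (deriv (opT lam f)) x + 4 * lam ^ 2 * opT lam f x = f x := by
  set c : ℝ → ℝ := fun y => Real.cos (2 * lam * y) * f y with hcdef
  set s : ℝ → ℝ := fun y => Real.sin (2 * lam * y) * f y with hsdef
  have hccont : Continuous c := by fun_prop
  have hscont : Continuous s := by fun_prop
  have hcI : Integrable c := hf.bdd_mul (Continuous.aestronglyMeasurable (by fun_prop))
    (c := 1) (Filter.Eventually.of_forall fun y => by rw [Real.norm_eq_abs]; exact abs_le.2 ⟨Real.neg_one_le_cos _, Real.cos_le_one _⟩)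
  have hsI : Integrable s := hf.bdd_mul (Continuous.aestronglyMeasurable (by fun_prop))
    (c := 1) (Filter.Eventually.of_forall fun y => by rw [Real.norm_eq_abs]; exact abs_le.2 ⟨Real.neg_one_le_sin _, Real.sin_le_one _⟩)
  set G : ℝ → ℝ := fun x => ∫ t in (0:ℝ)..x, c t with hGdef
  set H : ℝ → ℝ := fun x => ∫ t in (0:ℝ)..x, s t with hHdef
  have hG : ∀ x : ℝ, HasDerivAt G (c x) x := fun x =>
    intervalIntegral.integral_hasDerivAt_right (hcI.intervalIntegrable)
      hccont.aestronglyMeasurable.stronglyMeasurableAtFilter hccont.continuousAt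
  have hH : ∀ x : ℝ, HasDerivAt H (s x) x := fun x =>
    intervalIntegral.integral_hasDerivAt_right (hsI.intervalIntegrable)
      hscont.aestronglyMeasurable.stronglyMeasurableAtFilter hscont.continuousAt
  set A : ℝ := 2 * (∫ y in Set.Iic (0:ℝ), c y) - ∫ y, c y with hAdef
  set B : ℝ := (∫ y, s y) - 2 * (∫ y in Set.Iic (0:ℝ), s y) with hBdef
  have key : ∀ x : ℝ, opT lam f x = (1 / (4 * lam)) *
      (Real.sin (2 * lam * x) * (2 * G x + A) + Real.cos (2 * lam * x) * (B - 2 * H x)) := by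
    intro x
    have hbx : Integrable (fun y => Real.sin (2 * lam * |x - y|) * f y) :=
      hf.bdd_mul (Continuous.aestronglyMeasurable (by fun_prop))
        (c := 1) (Filter.Eventually.of_forall fun y => by rw [Real.norm_eq_abs]; exact abs_le.2 ⟨Real.neg_one_le_sin _, Real.sin_le_one _⟩)
    have e1 : (∫ y in Set.Iic x, Real.sin (2 * lam * |x - y|) * f y) =
        Real.sin (2 * lam * x) * (∫ y in Set.Iic x, c y) -
        Real.cos (2 * lam * x) * ∫ y in Set.Iic x, s y := by
      rw [← integral_const_mul, ← integral_const_mul,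
        ← integral_sub ((hcI.integrableOn).const_mul _) ((hsI.integrableOn).const_mul _)]
      refine setIntegral_congr_fun measurableSet_Iic fun y hy => ?_
      have hxy : |x - y| = x - y := abs_of_nonneg (by simpa using hy)
      rw [hxy, show 2 * lam * (x - y) = 2 * lam * x - 2 * lam * y by ring, Real.sin_sub]
      simp only [hcdef, hsdef]
      ring
    have e2 : (∫ y in Set.Ioi x, Real.sin (2 * lam * |x - y|) * f y) =
        Real.cos (2 * lam * x) * (∫ y in Set.Ioi x, s y) -
        Real.sin (2 * lam * x) * ∫ y in Set.Ioi x, c y := by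
      rw [← integral_const_mul, ← integral_const_mul,
        ← integral_sub ((hsI.integrableOn).const_mul _) ((hcI.integrableOn).const_mul _)]
      refine setIntegral_congr_fun measurableSet_Ioi fun y hy => ?_
      have hxy : |x - y| = y - x := by
        rw [abs_of_nonpos (by simp at hy; linarith)]; ring
      rw [hxy, show 2 * lam * (y - x) = 2 * lam * y - 2 * lam * x by ring, Real.sin_sub]
      simp only [hcdef, hsdef]
      ring
    have eIic_c : (∫ y in Set.Iic x, c y) = (∫ y in Set.Iic (0:ℝ), c y) + G x := by
      have := intervalIntegral.integral_Iic_sub_Iic (hcI.integrableOn) (hcI.integrableOn)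
        (a := (0:ℝ)) (b := x) (μ := volume)
      simp only [hGdef]; linarith
    have eIic_s : (∫ y in Set.Iic x, s y) = (∫ y in Set.Iic (0:ℝ), s y) + H x := by
      have := intervalIntegral.integral_Iic_sub_Iic (hsI.integrableOn) (hsI.integrableOn)
        (a := (0:ℝ)) (b := x) (μ := volume)
      simp only [hHdef]; linarith
    have eIoi_c : (∫ y in Set.Ioi x, c y) = (∫ y, c y) - ∫ y in Set.Iic x, c y := by
      have := intervalIntegral.integral_Iic_add_Ioi (b := x) (hcI.integrableOn)
        (hcI.integrableOn) (μ := volume)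
      linarith
    have eIoi_s : (∫ y in Set.Ioi x, s y) = (∫ y, s y) - ∫ y in Set.Iic x, s y := by
      have := intervalIntegral.integral_Iic_add_Ioi (b := x) (hsI.integrableOn)
        (hsI.integrableOn) (μ := volume)
      linarith
    rw [opT, ← intervalIntegral.integral_Iic_add_Ioi hbx.integrableOn hbx.integrableOn, e1, e2,
      eIoi_c, eIoi_s, eIic_c, eIic_s, hAdef, hBdef]
    ring
  have hkey : opT lam f = fun x => (1 / (4 * lam)) *
      (Real.sin (2 * lam * x) * (2 * G x + A) + Real.cos (2 * lam * x) * (B - 2 * H x)) :=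
    funext key
  rw [hkey]
  exact aux_ode lam (1 / (4 * lam)) A B (by field_simp) f G H hfc
    (fun x => by simpa [hcdef] using hG x) (fun x => by simpa [hsdef] using hH x)
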